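/- arXiv:2004.06255 — 7 statements merged into one kernel-verified Lean document; each statement's English description precedes it below -/
import Mathlib

section
/- Let h : ℝⁿ → ℝ be given by h(x) = min over C in a finite nonempty family E of nonempty convex compact subsets of ℝ × ℝⁿ of max over (a,v) in C of (a + ⟨v,x⟩), with h(0) = 0. Then h(x) ≥ 0 for all x ∈ ℝⁿ if and only if every C ∈ E contains a point of the form (a, 0) with a ≥ 0. -/
open scoped RealInnerProductSpace

theorem stmt_0 {n : ℕ} {ι : Type*} [Fintype ι] [Nonempty ι]
    (C : ι → Set (ℝ × EuclideanSpace ℝ (Fin n)))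
    (hne : ∀ j, (C j).Nonempty) (hconv : ∀ j, Convex ℝ (C j))
    (hcomp : ∀ j, IsCompact (C j))
    (h : EuclideanSpace ℝ (Fin n) → ℝ)
    (hh : ∀ x, h x = ⨅ j, sSup ((fun p : ℝ × EuclideanSpace ℝ (Fin n) =>
      p.1 + ⟪p.2, x⟫) '' C j))
    (h0 : h 0 = 0) :
    (∀ x, 0 ≤ h x) ↔
      ∀ j, ∃ a : ℝ, 0 ≤ a ∧ (a, (0 : EuclideanSpace ℝ (Fin n))) ∈ C j := by
  have hcont : ∀ x : EuclideanSpace ℝ (Fin n),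
      Continuous (fun p : ℝ × EuclideanSpace ℝ (Fin n) => p.1 + ⟪p.2, x⟫) := fun x =>
    continuous_fst.add (Continuous.inner continuous_snd continuous_const)
  have hbdd : ∀ (j) (x : EuclideanSpace ℝ (Fin n)),
      BddAbove ((fun p : ℝ × EuclideanSpace ℝ (Fin n) => p.1 + ⟪p.2, x⟫) '' C j) := fun j x =>
    ((hcomp j).image (hcont x)).bddAbove
  constructor
  · intro hpos j
    by_contra hcon
    push_neg at hcon
    -- separate C j from the ray L = {(a,0) : 0 ≤ a}
    set L : Set (ℝ × EuclideanSpace ℝ (Fin n)) := {p | 0 ≤ p.1 ∧ p.2 = 0} with hL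
    have hLconv : Convex ℝ L := by
      intro p hp q hq a b ha hb hab
      constructor
      · simpa using add_nonneg (mul_nonneg ha hp.1) (mul_nonneg hb hq.1)
      · simp [hp.2, hq.2]
    have hLclosed : IsClosed L := by
      have : L = (Prod.fst ⁻¹' Set.Ici (0:ℝ)) ∩
          (Prod.snd ⁻¹' {(0:EuclideanSpace ℝ (Fin n))}) := by
        ext p; simp [hL, Set.mem_setOf_eq]
      rw [this]
      exact (isClosed_Ici.preimage continuous_fst).inter
        (isClosed_singleton.preimage continuous_snd)
    have hdisj : Disjoint (C j) L := by
      rw [Set.disjoint_left]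
      rintro ⟨a, v⟩ hmem ⟨ha, hv⟩
      dsimp at hv
      subst hv
      exact hcon a ha hmem
    obtain ⟨f, u, v, hfu, huv, hfv⟩ :=
      geometric_hahn_banach_compact_closed (hconv j) (hcomp j) hLconv hLclosed hdisj
    have h0L : ((0:ℝ), (0:EuclideanSpace ℝ (Fin n))) ∈ L := ⟨le_refl 0, rfl⟩
    have hv0 : v < 0 := by
      have := hfv _ h0L
      rwa [show ((0:ℝ), (0:EuclideanSpace ℝ (Fin n))) = 0 from rfl, map_zero] at this
    have hu0 : u < 0 := huv.trans hv0
    set s : ℝ := f (1, 0) with hs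
    set g : EuclideanSpace ℝ (Fin n) →L[ℝ] ℝ :=
      f.comp (ContinuousLinearMap.inr ℝ ℝ (EuclideanSpace ℝ (Fin n))) with hg
    have hsplit : ∀ p : ℝ × EuclideanSpace ℝ (Fin n), f p = p.1 * s + g p.2 := by
      intro p
      have : p = p.1 • ((1:ℝ), (0:EuclideanSpace ℝ (Fin n))) + ((0:ℝ), p.2) := by
        ext <;> simp
      rw [this, map_add, map_smul]
      simp [hs, hg, smul_eq_mul]
    set w : EuclideanSpace ℝ (Fin n) :=
      (InnerProductSpace.toDual ℝ (EuclideanSpace ℝ (Fin n))).symm g with hw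
    have hgw : ∀ y : EuclideanSpace ℝ (Fin n), g y = ⟪w, y⟫ := by
      intro y
      simp [hw, InnerProductSpace.toDual_symm_apply]
    have hsnn : 0 ≤ s := by
      by_contra hsneg
      push_neg at hsneg
      have hmem : ((v - 1) / s, (0:EuclideanSpace ℝ (Fin n))) ∈ L := by
        exact ⟨div_nonneg_of_nonpos (by linarith) hsneg.le, rfl⟩
      have := hfv _ hmem
      rw [hsplit] at this
      simp only [map_zero] at this
      rw [div_mul_cancel₀ _ (ne_of_lt hsneg)] at this
      simp at this; linarith
    -- contradiction with positivity of sSup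
    have key : ∀ x : EuclideanSpace ℝ (Fin n),
        0 ≤ sSup ((fun p : ℝ × EuclideanSpace ℝ (Fin n) => p.1 + ⟪p.2, x⟫) '' C j) := by
      intro x
      have hb : BddBelow (Set.range fun j =>
          sSup ((fun p : ℝ × EuclideanSpace ℝ (Fin n) => p.1 + ⟪p.2, x⟫) '' C j)) :=
        (Set.finite_range _).bddBelow
      calc (0:ℝ) ≤ h x := hpos x
        _ ≤ _ := by rw [hh x]; exact ciInf_le hb j
    rcases eq_or_lt_of_le hsnn with hseq | hspos
    · -- s = 0 : ⟪w, y⟫ < u < 0 on C j, scale w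
      obtain ⟨M, hM⟩ := ((hcomp j).image continuous_fst).bddAbove
      set t : ℝ := (|M| + 1) / (-u) with ht
      have htpos : 0 < t := div_pos (by positivity) (by linarith)
      have hub : ∀ p ∈ C j, p.1 + ⟪p.2, t • w⟫ ≤ -1 := by
        rintro ⟨a, y⟩ hp
        have h1 : a ≤ M := hM ⟨(a, y), hp, rfl⟩
        have h2 : f (a, y) < u := hfu _ hp
        rw [hsplit, ← hseq, hgw] at h2
        simp only [mul_zero, zero_add] at h2
        have h3 : ⟪y, t • w⟫ = t * ⟪w, y⟫ := by
          rw [real_inner_smul_right, real_inner_comm]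
        have h4 : t * ⟪w, y⟫ ≤ t * u :=
          mul_le_mul_of_nonneg_left h2.le htpos.le
        have h5 : t * u = -(|M| + 1) := by
          rw [ht, div_mul_eq_mul_div, mul_comm, ← div_mul_eq_mul_div]
          rw [div_neg, div_self (by linarith : (u:ℝ) ≠ 0)]
          ring
        have h6 : M ≤ |M| := le_abs_self M
        rw [h3]; linarith
      have := key (t • w)
      have hsup : sSup ((fun p : ℝ × EuclideanSpace ℝ (Fin n) =>
          p.1 + ⟪p.2, t • w⟫) '' C j) ≤ -1 := by
        apply csSup_le ((hne j).image _)
        rintro z ⟨p, hp, rfl⟩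
        exact hub p hp
      linarith
    · -- s > 0 : take x = (1/s) • w
      set x : EuclideanSpace ℝ (Fin n) := s⁻¹ • w with hx
      have hub : ∀ p ∈ C j, p.1 + ⟪p.2, x⟫ ≤ u / s := by
        rintro ⟨a, y⟩ hp
        have h2 : f (a, y) < u := hfu _ hp
        rw [hsplit, hgw] at h2
        have h3 : ⟪y, x⟫ = s⁻¹ * ⟪w, y⟫ := by
          rw [hx, real_inner_smul_right, real_inner_comm]
        rw [h3, div_eq_inv_mul]
        have heq : a + s⁻¹ * ⟪w, y⟫ = s⁻¹ * (a * s + ⟪w, y⟫) := by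
          field_simp
        rw [heq]
        exact mul_le_mul_of_nonneg_left h2.le (by positivity)
      have := key x
      have hsup : sSup ((fun p : ℝ × EuclideanSpace ℝ (Fin n) =>
          p.1 + ⟪p.2, x⟫) '' C j) ≤ u / s := by
        apply csSup_le ((hne j).image _)
        rintro z ⟨p, hp, rfl⟩
        exact hub p hp
      have : u / s < 0 := div_neg_of_neg_of_pos hu0 hspos
      linarith
  · intro hmem x
    rw [hh x]
    apply le_ciInf
    intro j
    obtain ⟨a, ha, haC⟩ := hmem j
    have h1 : (0:ℝ) ≤ a + ⟪(0:EuclideanSpace ℝ (Fin n)), x⟫ := by simpa using ha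
    calc (0:ℝ) ≤ a + ⟪(0:EuclideanSpace ℝ (Fin n)), x⟫ := h1
      _ ≤ _ := le_csSup (hbdd j x) ⟨(a, 0), haC, rfl⟩
end

section
/- Let h(x) = min_{C ∈ E} max_{(a,v) ∈ C} (a + ⟨v,x⟩), where E is a finite nonempty family of nonempty convex compact subsets of ℝ × ℝⁿ. Then h is bounded from below on ℝⁿ if and only if every C ∈ E intersects the line L₀ = {(a, 0ₙ) : a ∈ ℝ}, i.e., every C contains a point whose ℝⁿ-component is zero. -/
open scoped RealInnerProductSpace

theorem stmt_1 {n : ℕ} {ι : Type*} [Fintype ι] [Nonempty ι]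
    (C : ι → Set (ℝ × EuclideanSpace ℝ (Fin n)))
    (hne : ∀ j, (C j).Nonempty) (hconv : ∀ j, Convex ℝ (C j))
    (hcomp : ∀ j, IsCompact (C j))
    (h : EuclideanSpace ℝ (Fin n) → ℝ)
    (hh : ∀ x, h x = ⨅ j, sSup ((fun p : ℝ × EuclideanSpace ℝ (Fin n) =>
      p.1 + ⟪p.2, x⟫) '' C j)) :
    (∃ M : ℝ, ∀ x, M ≤ h x) ↔
      ∀ j, ∃ a : ℝ, (a, (0 : EuclideanSpace ℝ (Fin n))) ∈ C j := by
  constructor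
  · rintro ⟨M, hM⟩ j
    by_contra hno
    push_neg at hno
    -- the projection K of C j to the second coordinate
    set K : Set (EuclideanSpace ℝ (Fin n)) := Prod.snd '' C j with hKdef
    have hKcomp : IsCompact K := (hcomp j).image continuous_snd
    have hKconv : Convex ℝ K := by
      have := (hconv j).linear_image (LinearMap.snd ℝ ℝ (EuclideanSpace ℝ (Fin n)))
      simpa [hKdef] using this
    have h0K : (0 : EuclideanSpace ℝ (Fin n)) ∉ K := by
      rintro ⟨⟨b, v⟩, hp, hp2⟩
      simp only at hp2
      subst hp2
      exact hno b hp
    obtain ⟨f, u, hsep, hu0⟩ :=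
      geometric_hahn_banach_closed_point hKconv hKcomp.isClosed h0K
    rw [map_zero] at hu0
    set y := (InnerProductSpace.toDual ℝ (EuclideanSpace ℝ (Fin n))).symm f with hy
    have hyv : ∀ v, ⟪y, v⟫ = f v := fun v =>
      InnerProductSpace.toDual_symm_apply
    -- bound on first coordinates
    have hAbdd : BddAbove (Prod.fst '' C j) :=
      ((hcomp j).image continuous_fst).bddAbove
    set A : ℝ := sSup (Prod.fst '' C j) with hA
    have hfst : ∀ p ∈ C j, p.1 ≤ A := fun p hp => le_csSup hAbdd ⟨p, hp, rfl⟩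
    set t : ℝ := max 1 ((M - A - 1) / u) with ht
    have ht0 : 0 ≤ t := le_trans zero_le_one (le_max_left _ _)
    have htu : t * u ≤ M - A - 1 := by
      have := le_max_right 1 ((M - A - 1) / u)
      rw [div_le_iff_of_neg hu0] at this
      linarith
    have hsup : sSup ((fun p : ℝ × EuclideanSpace ℝ (Fin n) =>
        p.1 + ⟪p.2, t • y⟫) '' C j) ≤ A + t * u := by
      apply csSup_le ((hne j).image _)
      rintro b ⟨p, hp, rfl⟩
      have h1 : ⟪p.2, t • y⟫ = t * ⟪y, p.2⟫ := by
        rw [real_inner_smul_right, real_inner_comm]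
      have h2 : f p.2 ≤ u := le_of_lt (hsep p.2 ⟨p, hp, rfl⟩)
      have h3 : t * ⟪y, p.2⟫ ≤ t * u := by
        rw [hyv]; exact mul_le_mul_of_nonneg_left h2 ht0
      have := hfst p hp
      simp only [h1]
      linarith
    have hle : h (t • y) ≤ sSup ((fun p : ℝ × EuclideanSpace ℝ (Fin n) =>
        p.1 + ⟪p.2, t • y⟫) '' C j) := by
      rw [hh]
      exact ciInf_le (Set.finite_range _).bddBelow j
    have := hM (t • y)
    linarith
  · intro hall
    choose a ha using hall
    refine ⟨⨅ j, a j, fun x => ?_⟩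
    rw [hh]
    refine le_ciInf fun j => ?_
    have h1 : (⨅ j, a j) ≤ a j := ciInf_le (Set.finite_range _).bddBelow j
    have h2 : a j ≤ sSup ((fun p : ℝ × EuclideanSpace ℝ (Fin n) =>
        p.1 + ⟪p.2, x⟫) '' C j) := by
      have hbdd : BddAbove ((fun p : ℝ × EuclideanSpace ℝ (Fin n) =>
          p.1 + ⟪p.2, x⟫) '' C j) :=
        ((hcomp j).image (continuous_fst.add
          (continuous_snd.inner continuous_const))).bddAbove
      have hmem : a j + ⟪(0 : EuclideanSpace ℝ (Fin n)), x⟫ ∈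
          ((fun p : ℝ × EuclideanSpace ℝ (Fin n) => p.1 + ⟪p.2, x⟫) '' C j) :=
        ⟨(a j, 0), ha j, rfl⟩
      have := le_csSup hbdd hmem
      simpa using this
    linarith
end

section
/- Let h(x) = min_{C ∈ E} max_{(a,v) ∈ C} (a + ⟨v,x⟩) with E a finite nonempty family of convex polytopes in ℝ × ℝⁿ. If there exists C ∈ E with C ∩ L₀ = ∅ (no point of C has zero ℝⁿ-component), then h is unbounded from below on ℝⁿ. -/
open scoped RealInnerProductSpace

theorem stmt_2 {n : ℕ} {ι : Type*} [Fintype ι] [Nonempty ι]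
    (C : ι → Set (ℝ × EuclideanSpace ℝ (Fin n)))
    (hne : ∀ j, (C j).Nonempty) (hconv : ∀ j, Convex ℝ (C j))
    (hcomp : ∀ j, IsCompact (C j))
    (h : EuclideanSpace ℝ (Fin n) → ℝ)
    (hh : ∀ x, h x = ⨅ j, sSup ((fun p : ℝ × EuclideanSpace ℝ (Fin n) =>
      p.1 + ⟪p.2, x⟫) '' C j))
    (hsep : ∃ j, ∀ a : ℝ, (a, (0 : EuclideanSpace ℝ (Fin n))) ∉ C j) :
    ∀ M : ℝ, ∃ x, h x < M := by
  intro M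
  obtain ⟨j, hj⟩ := hsep
  -- project to the second coordinate
  set K : Set (EuclideanSpace ℝ (Fin n)) := Prod.snd '' C j with hK
  have hKcomp : IsCompact K := (hcomp j).image continuous_snd
  have hKconv : Convex ℝ K := (hconv j).linear_image (LinearMap.snd ℝ ℝ _)
  have h0K : (0 : EuclideanSpace ℝ (Fin n)) ∉ K := by
    rintro ⟨p, hp, hp2⟩
    exact hj p.1 (by simpa [← hp2] using hp)
  obtain ⟨f, u, hfu, huf⟩ :=
    geometric_hahn_banach_point_closed hKconv hKcomp.isClosed h0K
  have hu : 0 < u := by simpa using hfu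
  set y : EuclideanSpace ℝ (Fin n) :=
    (InnerProductSpace.toDual ℝ (EuclideanSpace ℝ (Fin n))).symm f with hy
  have hyv : ∀ v, ⟪y, v⟫ = f v := fun v => by
    simp [hy, InnerProductSpace.toDual_symm_apply]
  -- bound on first coordinates
  obtain ⟨A, hA⟩ := ((hcomp j).image continuous_fst).bddAbove
  have hA' : ∀ p ∈ C j, p.1 ≤ A := fun p hp => hA ⟨p, hp, rfl⟩
  set t : ℝ := max 0 ((A - M + 1) / u) with ht
  have ht0 : 0 ≤ t := le_max_left _ _
  refine ⟨(-t) • y, ?_⟩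
  have hbound : sSup ((fun p : ℝ × EuclideanSpace ℝ (Fin n) =>
      p.1 + ⟪p.2, (-t) • y⟫) '' C j) ≤ A - t * u := by
    apply csSup_le ((hne j).image _)
    rintro _ ⟨p, hp, rfl⟩
    show p.1 + ⟪p.2, (-t) • y⟫ ≤ A - t * u
    have hf : u ≤ f p.2 := le_of_lt (huf p.2 ⟨p, hp, rfl⟩)
    have : ⟪p.2, (-t) • y⟫ = -t * f p.2 := by
      rw [real_inner_smul_right, real_inner_comm, hyv]
    rw [this]
    have : -t * f p.2 ≤ -t * u := by
      apply mul_le_mul_of_nonpos_left hf (by linarith)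
    nlinarith [hA' p hp]
  have hle : h ((-t) • y) ≤ A - t * u := by
    rw [hh]
    exact le_trans (ciInf_le (Finite.bddBelow_range _) j) hbound
  have htu : A - M + 1 ≤ t * u := by
    have : (A - M + 1) / u ≤ t := le_max_right _ _
    calc A - M + 1 = ((A - M + 1) / u) * u := by field_simp
    _ ≤ t * u := by nlinarith
  linarith
end

section
/- Let h be a bounded-below piecewise affine function h(x) = min_{C ∈ E} max_{(a,v) ∈ C}(a + ⟨v,x⟩) with E a finite family of convex compact sets each meeting L₀, and let a* = min_{C ∈ E} max{a : (a,0ₙ) ∈ C}. If x* is a global minimizer of h, then h(x*) = min_{C ∈ E*} max_{(a,v) ∈ C}(a + ⟨v,x*⟩), where E* = {C ∈ E : max{a : (a,0ₙ) ∈ C} = a*}. In other words, for every C ∈ E \ E*, max_{(a,v) ∈ C}(a + ⟨v,x*⟩) > a*. -/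
open scoped RealInnerProductSpace

theorem stmt_4 {n : ℕ} {ι : Type*} [Fintype ι] [Nonempty ι]
    (C : ι → Set (ℝ × EuclideanSpace ℝ (Fin n)))
    (hne : ∀ j, (C j).Nonempty) (hconv : ∀ j, Convex ℝ (C j))
    (hcomp : ∀ j, IsCompact (C j))
    (hL0 : ∀ j, ∃ a : ℝ, (a, (0 : EuclideanSpace ℝ (Fin n))) ∈ C j)
    (g : ι → EuclideanSpace ℝ (Fin n) → ℝ)
    (hg : ∀ j x, g j x = sSup ((fun p : ℝ × EuclideanSpace ℝ (Fin n) =>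
      p.1 + ⟪p.2, x⟫) '' C j))
    (h : EuclideanSpace ℝ (Fin n) → ℝ)
    (hh : ∀ x, h x = ⨅ j, g j x)
    (aStar : ℝ)
    (ha : aStar = ⨅ j, sSup {a : ℝ | (a, (0 : EuclideanSpace ℝ (Fin n))) ∈ C j})
    (xs : EuclideanSpace ℝ (Fin n))
    (hxs : ∀ x, h xs ≤ h x) :
    (∀ j, sSup {a : ℝ | (a, (0 : EuclideanSpace ℝ (Fin n))) ∈ C j} ≠ aStar →
      aStar < g j xs) ∧
    h xs = ⨅ j : {j : ι //
      sSup {a : ℝ | (a, (0 : EuclideanSpace ℝ (Fin n))) ∈ C j} = aStar},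
      g j.1 xs := by
  classical
  set α : ι → ℝ := fun j => sSup {a : ℝ | (a, (0 : EuclideanSpace ℝ (Fin n))) ∈ C j} with hαdef
  -- slice sets are compact
  have hSeq : ∀ j, {a : ℝ | (a, (0 : EuclideanSpace ℝ (Fin n))) ∈ C j}
      = Prod.fst '' (C j ∩ {p : ℝ × EuclideanSpace ℝ (Fin n) | p.2 = 0}) := by
    intro j
    ext a
    constructor
    · intro haj; exact ⟨(a, 0), ⟨haj, rfl⟩, rfl⟩
    · rintro ⟨p, ⟨hp, h0⟩, rfl⟩
      have : p = (p.1, (0 : EuclideanSpace ℝ (Fin n))) := by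
        rw [Prod.ext_iff]; exact ⟨rfl, h0⟩
      simpa [Set.mem_setOf_eq, ← this] using hp
  have hScomp : ∀ j, IsCompact {a : ℝ | (a, (0 : EuclideanSpace ℝ (Fin n))) ∈ C j} := by
    intro j
    rw [hSeq j]
    exact (((hcomp j).inter_right
      (isClosed_singleton.preimage continuous_snd)).image continuous_fst)
  have hSne : ∀ j, {a : ℝ | (a, (0 : EuclideanSpace ℝ (Fin n))) ∈ C j}.Nonempty := hL0
  have hslice : ∀ j, (α j, (0 : EuclideanSpace ℝ (Fin n))) ∈ C j := fun j =>
    (hScomp j).sSup_mem (hSne j)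
  have hSle : ∀ j a, (a, (0 : EuclideanSpace ℝ (Fin n))) ∈ C j → a ≤ α j := fun j a haj =>
    le_csSup (hScomp j).bddAbove haj
  -- facts about g
  have hgcont : ∀ x : EuclideanSpace ℝ (Fin n), Continuous fun p : ℝ × EuclideanSpace ℝ (Fin n) => p.1 + ⟪p.2, x⟫ :=
    fun x => continuous_fst.add (continuous_snd.inner continuous_const)
  have hg_ge : ∀ j x, ∀ p ∈ C j, p.1 + ⟪p.2, x⟫ ≤ g j x := by
    intro j x p hp
    rw [hg]
    exact le_csSup ((hcomp j).image (hgcont x)).bddAbove ⟨p, hp, rfl⟩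
  have hg_le : ∀ j x b, (∀ p ∈ C j, p.1 + ⟪p.2, x⟫ ≤ b) → g j x ≤ b := by
    intro j x b hb
    rw [hg]
    refine csSup_le ((hne j).image _) ?_
    rintro y ⟨p, hp, rfl⟩; exact hb p hp
  have hαg : ∀ j x, α j ≤ g j x := by
    intro j x
    have := hg_ge j x _ (hslice j)
    simpa using this
  -- aStar facts
  have hbdd : BddBelow (Set.range α) := (Set.finite_range α).bddBelow
  have hale : ∀ j, aStar ≤ α j := by
    intro j; rw [ha]; exact ciInf_le hbdd j
  -- key lemma: inf of g j is α j
  have key : ∀ j, ∀ ε : ℝ, 0 < ε → ∃ x : EuclideanSpace ℝ (Fin n), g j x < α j + ε := by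
    intro j ε hε
    have hnotmem : ((α j + ε, (0 : EuclideanSpace ℝ (Fin n))) : ℝ × EuclideanSpace ℝ (Fin n)) ∉ C j := by
      intro hmem
      have := hSle j _ hmem
      linarith
    obtain ⟨f, u, hfu, hufx⟩ :=
      geometric_hahn_banach_closed_point (hconv j) (hcomp j).isClosed hnotmem
    set s : ℝ := f (1, 0) with hs
    have hfval : ∀ p : ℝ × EuclideanSpace ℝ (Fin n), f p = p.1 * s + f (0, p.2) := by
      intro p
      have h1 : p = p.1 • ((1 : ℝ), (0 : EuclideanSpace ℝ (Fin n))) + (0, p.2) := by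
        rw [Prod.ext_iff]; simp
      rw [h1, f.map_add, f.map_smul]; ring_nf; simp [hs]; ring
    have hspos : 0 < s := by
      have h1 : f (α j, (0 : EuclideanSpace ℝ (Fin n))) < u := hfu _ (hslice j)
      have h2 : u < f (α j + ε, (0 : EuclideanSpace ℝ (Fin n))) := hufx
      rw [hfval] at h1 h2
      simp only at h1 h2
      nlinarith
    set φ : EuclideanSpace ℝ (Fin n) →L[ℝ] ℝ := f.comp (ContinuousLinearMap.inr ℝ ℝ (EuclideanSpace ℝ (Fin n))) with hφ
    set y : EuclideanSpace ℝ (Fin n) := (InnerProductSpace.toDual ℝ (EuclideanSpace ℝ (Fin n))).symm φ with hy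
    have hyv : ∀ v : EuclideanSpace ℝ (Fin n), ⟪y, v⟫ = f (0, v) := by
      intro v
      rw [hy, InnerProductSpace.toDual_symm_apply]
      simp [hφ]
    refine ⟨s⁻¹ • y, ?_⟩
    have hub : g j (s⁻¹ • y) ≤ s⁻¹ * u := by
      refine hg_le j _ _ ?_
      intro p hp
      have h1 : f p < u := hfu p hp
      rw [hfval] at h1
      have h2 : ⟪p.2, s⁻¹ • y⟫ = s⁻¹ * f (0, p.2) := by
        rw [real_inner_smul_right, real_inner_comm, hyv]
      rw [h2]
      have := (mul_lt_mul_iff_right₀ (inv_pos.mpr hspos)).mpr h1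
      have h3 : p.1 + s⁻¹ * f (0, p.2) = s⁻¹ * (p.1 * s + f (0, p.2)) := by
        field_simp
      rw [h3]
      exact le_of_lt this
    have h2 : u < (α j + ε) * s := by
      have := hufx; rw [hfval] at this; simpa [Prod.mk_zero_zero] using this
    have : s⁻¹ * u < α j + ε := by
      rw [inv_mul_lt_iff₀ hspos, mul_comm]; exact h2
    linarith
  -- h xs = aStar
  have hbddg : ∀ x : EuclideanSpace ℝ (Fin n), BddBelow (Set.range fun j => g j x) :=
    fun x => (Set.finite_range _).bddBelow
  have hge : aStar ≤ h xs := by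
    rw [hh]
    exact le_ciInf fun j => le_trans (hale j) (hαg j xs)
  have hle : h xs ≤ aStar := by
    refine le_of_forall_pos_le_add ?_
    intro ε hε
    obtain ⟨j₀, hj₀⟩ := Finite.exists_min α
    have hαj₀ : α j₀ = aStar := by
      refine le_antisymm ?_ (hale j₀)
      rw [ha]; exact le_ciInf hj₀
    obtain ⟨x, hx⟩ := key j₀ ε hε
    have : h x ≤ g j₀ x := by rw [hh]; exact ciInf_le (hbddg x) j₀
    have := le_trans (hxs x) this
    rw [hαj₀] at hx
    linarith
  have hstar : h xs = aStar := le_antisymm hle hge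
  -- the minimizer index
  obtain ⟨j₁, hj₁⟩ := Finite.exists_min fun j => g j xs
  have hmin : g j₁ xs = aStar := by
    refine le_antisymm ?_ ?_
    · rw [← hstar, hh]
      exact le_ciInf hj₁
    · exact le_trans (hale j₁) (hαg j₁ xs)
  have hαj₁ : α j₁ = aStar :=
    le_antisymm (by rw [← hmin]; exact hαg j₁ xs) (hale j₁)
  constructor
  · intro j hj
    have : aStar < α j := lt_of_le_of_ne (hale j) (Ne.symm hj)
    exact lt_of_lt_of_le this (hαg j xs)
  · haveI : Nonempty {j : ι // α j = aStar} := ⟨⟨j₁, hαj₁⟩⟩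
    have hbddsub : BddBelow (Set.range fun j : {j : ι // α j = aStar} => g j.1 xs) :=
      (Set.finite_range _).bddBelow
    refine le_antisymm ?_ ?_
    · refine le_ciInf fun j => ?_
      rw [hh]; exact ciInf_le (hbddg xs) j.1
    · rw [hstar]
      exact le_of_le_of_eq
        (ciInf_le hbddsub (⟨j₁, hαj₁⟩ : {j : ι // α j = aStar})) hmin
end

section
/- Let h(x) = min_{C ∈ E} max_{(a,v) ∈ C}(a + ⟨v,x⟩), where E is a finite family of convex polytopes C = conv{(a_i, v_i) : i ∈ I_C} each meeting L₀, and a* = min_{C ∈ E} max{a : (a,0ₙ) ∈ C}. Then x* is a global minimizer of h if and only if x* ∈ ⋃_{C ∈ E*} X(C), where E* = {C ∈ E : max{a : (a,0ₙ) ∈ C} = a*} and X(C) = {x : a_i + ⟨v_i, x⟩ ≤ a* for all i ∈ I_C}. -/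
open scoped RealInnerProductSpace Pointwise

theorem stmt_6 {n : ℕ} {J : Type*} [Fintype J] [Nonempty J]
    (I : J → Type*) [∀ j, Fintype (I j)] [∀ j, Nonempty (I j)]
    (a : (j : J) → I j → ℝ) (v : (j : J) → I j → EuclideanSpace ℝ (Fin n))
    (C : J → Set (ℝ × EuclideanSpace ℝ (Fin n)))
    (hC : ∀ j, C j = convexHull ℝ (Set.range fun i : I j => (a j i, v j i)))
    (hL0 : ∀ j, ∃ b : ℝ, (b, (0 : EuclideanSpace ℝ (Fin n))) ∈ C j)
    (h : EuclideanSpace ℝ (Fin n) → ℝ)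
    (hh : ∀ x, h x = ⨅ j, sSup ((fun p : ℝ × EuclideanSpace ℝ (Fin n) =>
      p.1 + ⟪p.2, x⟫) '' C j))
    (aStar : ℝ)
    (ha : aStar = ⨅ j, sSup {b : ℝ | (b, (0 : EuclideanSpace ℝ (Fin n))) ∈ C j})
    (xs : EuclideanSpace ℝ (Fin n)) :
    (∀ x, h xs ≤ h x) ↔
      ∃ j : J, sSup {b : ℝ | (b, (0 : EuclideanSpace ℝ (Fin n))) ∈ C j} = aStar ∧
        ∀ i : I j, a j i + ⟪v j i, xs⟫ ≤ aStar := by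
  set f : J → EuclideanSpace ℝ (Fin n) → ℝ := fun j x =>
    sSup ((fun p : ℝ × EuclideanSpace ℝ (Fin n) => p.1 + ⟪p.2, x⟫) '' C j) with hf
  set g : J → ℝ := fun j => sSup {b : ℝ | (b, (0 : EuclideanSpace ℝ (Fin n))) ∈ C j} with hg
  -- basic facts
  have hKcomp : ∀ j, IsCompact (C j) := by
    intro j; rw [hC j]
    exact (Set.finite_range _).isCompact_convexHull ℝ
  have hKconv : ∀ j, Convex ℝ (C j) := by
    intro j; rw [hC j]; exact convex_convexHull ℝ _
  have hcont : ∀ x : EuclideanSpace ℝ (Fin n), Continuous fun p : ℝ × EuclideanSpace ℝ (Fin n) => p.1 + ⟪p.2, x⟫ :=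
    fun x => continuous_fst.add (continuous_snd.inner continuous_const)
  have hKne : ∀ j, (C j).Nonempty := fun j => ⟨_, (hL0 j).choose_spec⟩
  have himgbdd : ∀ j x, BddAbove ((fun p : ℝ × EuclideanSpace ℝ (Fin n) => p.1 + ⟪p.2, x⟫) '' C j) :=
    fun j x => ((hKcomp j).image (hcont x)).bddAbove
  have mem_le_f : ∀ j x, ∀ p ∈ C j, p.1 + ⟪p.2, x⟫ ≤ f j x := by
    intro j x p hp
    exact le_csSup (himgbdd j x) ⟨p, hp, rfl⟩
  have f_le : ∀ j x c, (∀ i : I j, a j i + ⟪v j i, x⟫ ≤ c) → f j x ≤ c := by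
    intro j x c hi
    apply csSup_le (Set.Nonempty.image _ (hKne j))
    rintro b ⟨p, hp, rfl⟩
    have hlin : IsLinearMap ℝ fun p : ℝ × EuclideanSpace ℝ (Fin n) => p.1 + ⟪p.2, x⟫ := by
      constructor
      · intro p q
        simp only [Prod.fst_add, Prod.snd_add, inner_add_left]
        ring
      · intro c p
        simp only [Prod.smul_fst, Prod.smul_snd, smul_eq_mul, real_inner_smul_left]
        ring
    have hsub : C j ⊆ {p : ℝ × EuclideanSpace ℝ (Fin n) | p.1 + ⟪p.2, x⟫ ≤ c} := by
      rw [hC j]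
      apply convexHull_min _ (convex_halfSpace_le hlin c)
      rintro q ⟨i, rfl⟩
      exact hi i
    exact hsub hp
  have gne : ∀ j, {b : ℝ | (b, (0 : EuclideanSpace ℝ (Fin n))) ∈ C j}.Nonempty := hL0
  have gbdd : ∀ j, BddAbove {b : ℝ | (b, (0 : EuclideanSpace ℝ (Fin n))) ∈ C j} := by
    intro j
    refine ⟨f j 0, fun b hb => ?_⟩
    have := mem_le_f j 0 (b, (0 : EuclideanSpace ℝ (Fin n))) hb
    simpa using this
  have g_le_f : ∀ j x, g j ≤ f j x := by
    intro j x
    apply csSup_le (gne j)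
    intro b hb
    have := mem_le_f j x (b, (0 : EuclideanSpace ℝ (Fin n))) hb
    simpa using this
  have hbddF : ∀ x, BddBelow (Set.range fun j => f j x) :=
    fun x => (Set.finite_range _).bddBelow
  have hbddG : BddBelow (Set.range g) := (Set.finite_range _).bddBelow
  have aStar_le_g : ∀ j, aStar ≤ g j := by
    intro j; rw [ha]; exact ciInf_le hbddG j
  have h_ge : ∀ x, aStar ≤ h x := by
    intro x; rw [hh x]
    exact le_ciInf fun j => (aStar_le_g j).trans (g_le_f j x)
  have h_le_f : ∀ j x, h x ≤ f j x := by
    intro j x; rw [hh x]; exact ciInf_le (hbddF x) j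
  constructor
  · -- hard direction
    intro hmin
    obtain ⟨j0, hj0⟩ : ∃ j0, g j0 = aStar := by
      obtain ⟨j0, hj0⟩ := exists_eq_ciInf_of_finite (f := g)
      exact ⟨j0, by rw [hj0, ha]⟩
    -- key: for every ε > 0 there is x with f j0 x ≤ aStar + ε
    have key : ∀ ε : ℝ, 0 < ε → ∃ x, f j0 x ≤ aStar + ε := by
      intro ε hε
      set S : Set (ℝ × EuclideanSpace ℝ (Fin n)) := Set.Iic (0 : ℝ) ×ˢ ({0} : Set (EuclideanSpace ℝ (Fin n))) with hS
      set D : Set (ℝ × EuclideanSpace ℝ (Fin n)) := C j0 + S with hD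
      have hDconv : Convex ℝ D := by
        rw [hD, hS]
        exact (hKconv j0).add ((convex_Iic 0).prod (convex_singleton 0))
      have hDclosed : IsClosed D := by
        rw [hD, hS]
        exact IsClosed.add_left_of_isCompact (isClosed_Iic.prod isClosed_singleton) (hKcomp j0)
      have hKD : C j0 ⊆ D := by
        intro p hp
        exact ⟨p, hp, (0, 0), by simp [hS], by simp⟩
      have hnot : ((aStar + ε, (0 : EuclideanSpace ℝ (Fin n))) : ℝ × EuclideanSpace ℝ (Fin n)) ∉ D := by
        rintro ⟨p, hp, q, ⟨hq1, hq2⟩, hpq⟩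
        simp only [Set.mem_singleton_iff] at hq2
        have h1 : p.1 + q.1 = aStar + ε := congrArg Prod.fst hpq
        have h2 : p.2 + q.2 = 0 := congrArg Prod.snd hpq
        rw [hq2, add_zero] at h2
        have hp2 : p.1 ∈ {b : ℝ | (b, (0 : EuclideanSpace ℝ (Fin n))) ∈ C j0} := by
          simp only [Set.mem_setOf_eq, ← h2]
          exact hp
        have h4 : p.1 ≤ g j0 := le_csSup (gbdd j0) hp2
        rw [hj0] at h4
        simp only [Set.mem_Iic] at hq1
        linarith
      obtain ⟨φ, u, hsep, hpt⟩ := geometric_hahn_banach_closed_point hDconv hDclosed hnot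
      set s : ℝ := φ (1, 0) with hsdef
      have φ_eq : ∀ (b : ℝ) (w : EuclideanSpace ℝ (Fin n)), φ (b, w) = b * s + φ (0, w) := by
        intro b w
        have : ((b, w) : ℝ × EuclideanSpace ℝ (Fin n)) = b • ((1 : ℝ), (0 : EuclideanSpace ℝ (Fin n))) + ((0 : ℝ), w) := by
          simp [Prod.ext_iff]
        rw [this, map_add, map_smul]
        simp [smul_eq_mul, mul_comm, hsdef]
      obtain ⟨b0, hb0⟩ := hL0 j0
      have hray : ∀ t : ℝ, t ≤ 0 → (b0 + t) * s < u := by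
        intro t ht
        have hmem : ((b0 + t, (0 : EuclideanSpace ℝ (Fin n))) : ℝ × EuclideanSpace ℝ (Fin n)) ∈ D :=
          ⟨(b0, 0), hb0, (t, 0), ⟨ht, rfl⟩, by simp [Prod.ext_iff]⟩
        have := hsep _ hmem
        rw [φ_eq] at this
        simpa [show ((0 : ℝ), (0 : EuclideanSpace ℝ (Fin n))) = 0 from rfl] using this
      have hpt' : u < (aStar + ε) * s := by
        have := hpt
        rw [φ_eq] at this
        simpa [show ((0 : ℝ), (0 : EuclideanSpace ℝ (Fin n))) = 0 from rfl] using this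
      have hs_nonneg : 0 ≤ s := by
        by_contra hneg
        push_neg at hneg
        have ht : min 0 (u / s - b0) ≤ 0 := min_le_left _ _
        have h1 := hray _ ht
        have h2 : b0 + min 0 (u / s - b0) ≤ u / s := by
          have := min_le_right 0 (u / s - b0); linarith
        have h3 : u / s * s ≤ (b0 + min 0 (u / s - b0)) * s :=
          mul_le_mul_of_nonpos_right h2 (le_of_lt hneg)
        rw [div_mul_cancel₀ u (ne_of_lt hneg)] at h3
        linarith
      have hs_pos : 0 < s := by
        rcases lt_or_eq_of_le hs_nonneg with hp | hp
        · exact hp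
        · exfalso
          have h1 := hray 0 le_rfl
          rw [← hp] at h1 hpt'
          simp at h1 hpt'
          linarith
      set y : EuclideanSpace ℝ (Fin n) := (InnerProductSpace.toDual ℝ (EuclideanSpace ℝ (Fin n))).symm
        (φ.comp (ContinuousLinearMap.inr ℝ ℝ (EuclideanSpace ℝ (Fin n)))) with hy
      have hyw : ∀ w : EuclideanSpace ℝ (Fin n), ⟪y, w⟫ = φ (0, w) := by
        intro w
        rw [hy, InnerProductSpace.toDual_symm_apply]
        rfl
      refine ⟨s⁻¹ • y, f_le j0 _ _ fun i => ?_⟩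
      have hmemK : ((a j0 i, v j0 i) : ℝ × EuclideanSpace ℝ (Fin n)) ∈ C j0 := by
        rw [hC j0]
        exact subset_convexHull ℝ _ ⟨i, rfl⟩
      have h1 : φ (a j0 i, v j0 i) < u := hsep _ (hKD hmemK)
      rw [φ_eq, ← hyw] at h1
      have h2 : a j0 i * s + ⟪y, v j0 i⟫ < (aStar + ε) * s := lt_trans h1 hpt'
      have h3 : ⟪v j0 i, s⁻¹ • y⟫ = s⁻¹ * ⟪y, v j0 i⟫ := by
        rw [real_inner_smul_right, real_inner_comm]
      rw [h3]
      have hs_ne : s ≠ 0 := ne_of_gt hs_pos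
      have h4 : (a j0 i + s⁻¹ * ⟪y, v j0 i⟫) * s = a j0 i * s + ⟪y, v j0 i⟫ := by
        field_simp
      have h5 : (a j0 i + s⁻¹ * ⟪y, v j0 i⟫) * s < (aStar + ε) * s := by
        rw [h4]; exact h2
      exact (lt_of_mul_lt_mul_right h5 hs_pos.le).le
    -- conclude h xs = aStar
    have hxs_le : h xs ≤ aStar := by
      by_contra hc
      push_neg at hc
      obtain ⟨x, hx⟩ := key ((h xs - aStar) / 2) (by linarith)
      have := (hmin x).trans ((h_le_f j0 x).trans hx)
      linarith
    have hxs_eq : h xs = aStar := le_antisymm hxs_le (h_ge xs)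
    obtain ⟨j1, hj1⟩ := exists_eq_ciInf_of_finite (f := fun j => f j xs)
    have hfj1 : f j1 xs = aStar := by
      rw [hj1, ← hh xs, hxs_eq]
    refine ⟨j1, le_antisymm ?_ (aStar_le_g j1), fun i => ?_⟩
    · rw [← hfj1]; exact g_le_f j1 xs
    · rw [← hfj1]
      apply mem_le_f j1 xs (a j1 i, v j1 i)
      rw [hC j1]
      exact subset_convexHull ℝ _ ⟨i, rfl⟩
  · -- easy direction
    rintro ⟨j, hgj, hi⟩ x
    calc h xs ≤ f j xs := h_le_f j xs
      _ ≤ aStar := f_le j xs aStar hi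
      _ ≤ h x := h_ge x
end

section
/- In the setting of a bounded-below piecewise affine function h(x) = min_{C ∈ E} max_{(a,v) ∈ C}(a + ⟨v,x⟩) with minimum value a*, if there exists a polytope C* = conv{(a_i, v_i) : i ∈ I} in E with max{a : (a,0ₙ) ∈ C*} = a* such that a_i ≤ a* for all i ∈ I, then h(0ₙ) = a*, i.e., the origin is a global minimizer of h. -/
open scoped RealInnerProductSpace

theorem stmt_7 {n : ℕ} {J : Type*} [Fintype J] [Nonempty J]
    (I : J → Type*) [∀ j, Fintype (I j)] [∀ j, Nonempty (I j)]
    (a : (j : J) → I j → ℝ) (v : (j : J) → I j → EuclideanSpace ℝ (Fin n))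
    (C : J → Set (ℝ × EuclideanSpace ℝ (Fin n)))
    (hC : ∀ j, C j = convexHull ℝ (Set.range fun i : I j => (a j i, v j i)))
    (hL0 : ∀ j, ∃ b : ℝ, (b, (0 : EuclideanSpace ℝ (Fin n))) ∈ C j)
    (h : EuclideanSpace ℝ (Fin n) → ℝ)
    (hh : ∀ x, h x = ⨅ j, sSup ((fun p : ℝ × EuclideanSpace ℝ (Fin n) =>
      p.1 + ⟪p.2, x⟫) '' C j))
    (aStar : ℝ)
    (ha : aStar = ⨅ j, sSup {b : ℝ | (b, (0 : EuclideanSpace ℝ (Fin n))) ∈ C j})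
    (js : J)
    (hjs : sSup {b : ℝ | (b, (0 : EuclideanSpace ℝ (Fin n))) ∈ C js} = aStar)
    (hle : ∀ i : I js, a js i ≤ aStar) :
    h 0 = aStar ∧ ∀ x, h 0 ≤ h x := by
  have hcomp : ∀ j, IsCompact (C j) := by
    intro j
    rw [hC j]
    exact (Set.finite_range _).isCompact_convexHull ℝ
  have hcont : ∀ x : EuclideanSpace ℝ (Fin n),
      Continuous (fun p : ℝ × EuclideanSpace ℝ (Fin n) => p.1 + ⟪p.2, x⟫) :=
    fun x => continuous_fst.add (continuous_snd.inner continuous_const)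
  have hbdd : ∀ j x, BddAbove ((fun p : ℝ × EuclideanSpace ℝ (Fin n) =>
      p.1 + ⟪p.2, x⟫) '' C j) :=
    fun j x => ((hcomp j).image (hcont x)).bddAbove
  -- key lower bound: aStar ≤ every sup term
  have key1 : ∀ (j : J) (x : EuclideanSpace ℝ (Fin n)),
      aStar ≤ sSup ((fun p : ℝ × EuclideanSpace ℝ (Fin n) => p.1 + ⟪p.2, x⟫) '' C j) := by
    intro j x
    have h1 : aStar ≤ sSup {b : ℝ | (b, (0 : EuclideanSpace ℝ (Fin n))) ∈ C j} := by
      rw [ha]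
      exact ciInf_le (Set.finite_range _).bddBelow j
    refine h1.trans (csSup_le_csSup (hbdd j x) (hL0 j) ?_)
    rintro b hb
    refine ⟨(b, 0), hb, ?_⟩
    simp [inner_zero_left]
  -- upper bound at js, x = 0
  have key2 : sSup ((fun p : ℝ × EuclideanSpace ℝ (Fin n) =>
      p.1 + ⟪p.2, (0 : EuclideanSpace ℝ (Fin n))⟫) '' C js) ≤ aStar := by
    obtain ⟨b, hb⟩ := hL0 js
    refine csSup_le ⟨_, ⟨(b, 0), hb, rfl⟩⟩ ?_
    rintro y ⟨p, hp, rfl⟩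
    have hconv : Convex ℝ {p : ℝ × EuclideanSpace ℝ (Fin n) | p.1 ≤ aStar} :=
      convex_halfSpace_le (LinearMap.fst ℝ ℝ (EuclideanSpace ℝ (Fin n))).isLinear aStar
    have hsub : C js ⊆ {p : ℝ × EuclideanSpace ℝ (Fin n) | p.1 ≤ aStar} := by
      rw [hC js]
      refine convexHull_min ?_ hconv
      rintro q ⟨i, rfl⟩
      exact hle i
    have := hsub hp
    simpa [inner_zero_right] using this
  have hx : ∀ x, aStar ≤ h x := by
    intro x
    rw [hh]
    exact le_ciInf fun j => key1 j x
  have h0 : h 0 = aStar := by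
    refine le_antisymm ?_ (hx 0)
    rw [hh]
    exact (ciInf_le (Set.finite_range _).bddBelow js).trans key2
  exact ⟨h0, fun x => h0 ▸ hx x⟩
end

section
/- The function h₃(x₁, x₂) = min{max{-x₁, x₁, -x₂, x₂}, max{2x₁ - 3, -2x₁ + 5, x₂ - 1, -x₂ + 3}} on ℝ² has global minimum value 0, attained uniquely at the origin. -/
theorem stmt_13
    (h₃ : ℝ → ℝ → ℝ)
    (hdef : ∀ x₁ x₂, h₃ x₁ x₂ =
      min (max (max (-x₁) x₁) (max (-x₂) x₂))
        (max (max (2 * x₁ - 3) (-2 * x₁ + 5)) (max (x₂ - 1) (-x₂ + 3)))) :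
    (∀ x₁ x₂, 0 ≤ h₃ x₁ x₂) ∧ h₃ 0 0 = 0 ∧
      ∀ x₁ x₂, h₃ x₁ x₂ = 0 → x₁ = 0 ∧ x₂ = 0 := by
  have key : ∀ x₁ x₂ : ℝ, (0:ℝ) ≤ max (max (-x₁) x₁) (max (-x₂) x₂) ∧
      (1:ℝ) ≤ max (max (2 * x₁ - 3) (-2 * x₁ + 5)) (max (x₂ - 1) (-x₂ + 3)) := by
    intro x₁ x₂
    constructor
    · rcases le_total 0 x₁ with h | h
      · exact le_trans h (le_max_of_le_left (le_max_right _ _))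
      · exact le_trans (by linarith) (le_max_of_le_left (le_max_left _ _))
    · rcases le_total x₁ 2 with h | h
      · exact le_trans (by linarith) (le_max_of_le_left (le_max_right _ _))
      · exact le_trans (by linarith) (le_max_of_le_left (le_max_left _ _))
  refine ⟨?_, ?_, ?_⟩
  · intro x₁ x₂
    rw [hdef]
    exact le_min (key x₁ x₂).1 (le_trans zero_le_one (key x₁ x₂).2)
  · rw [hdef]; norm_num
  · intro x₁ x₂ h
    rw [hdef] at h
    rcases min_cases (max (max (-x₁) x₁) (max (-x₂) x₂))
      (max (max (2 * x₁ - 3) (-2 * x₁ + 5)) (max (x₂ - 1) (-x₂ + 3))) with ⟨he, _⟩ | ⟨he, _⟩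
    · rw [he] at h
      have h1 : -x₁ ≤ 0 := le_trans (le_max_of_le_left (le_max_left _ _)) h.le
      have h2 : x₁ ≤ 0 := le_trans (le_max_of_le_left (le_max_right _ _)) h.le
      have h3 : -x₂ ≤ 0 := le_trans (le_max_of_le_right (le_max_left _ _)) h.le
      have h4 : x₂ ≤ 0 := le_trans (le_max_of_le_right (le_max_right _ _)) h.le
      constructor <;> linarith
    · rw [he] at h
      linarith [(key x₁ x₂).2]
end
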